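/- Assume S has no conjugate points. Then: (i) for every x ∈ ℝ^d the constant sequence x_n = x (n ∈ ℤ) is extremal, i.e. ∂₂S(x,x) + ∂₁S(x,x) = 0 for all x; (ii) every extremal sequence (x_n)_{n∈ℤ} is either injective or constant. -/

import Mathlib

noncomputable section

/-- Configuration space `ℝ^d` with the Euclidean norm. -/
abbrev Ed (d : ℕ) := EuclideanSpace ℝ (Fin d)

/-- The point of `ℝ^d` with integer coordinates given by `r ∈ ℤ^d`. -/
def intVec (d : ℕ) (r : Fin d → ℤ) : Ed d := WithLp.toLp 2 (fun i => (r i : ℝ))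

/-- A generating function: a `C²` map `S : ℝ^d × ℝ^d → ℝ` which is `ℤ^d`-periodic for
the diagonal action and satisfies the uniform twist condition
`∑_{i,j} ∂²S/∂xᵢ∂yⱼ (x,y) ξᵢ ξⱼ ≤ -A‖ξ‖²` (expressed via the second derivative of `S`
applied to `((ξ,0),(0,ξ))`). -/
def IsGenFn {d : ℕ} (S : Ed d × Ed d → ℝ) : Prop :=
  ContDiff ℝ 2 S ∧
  (∀ (r : Fin d → ℤ) (x y : Ed d), S (x + intVec d r, y + intVec d r) = S (x, y)) ∧
  ∃ A : ℝ, 0 < A ∧ ∀ (x y ξ : Ed d),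
    iteratedFDeriv ℝ 2 S (x, y) ![(ξ, 0), (0, ξ)] ≤ -A * ‖ξ‖ ^ 2

/-- `∂₁S`, the partial differential of `S` with respect to its first variable. -/
def D1 {d : ℕ} (S : Ed d × Ed d → ℝ) (x y : Ed d) : Ed d →L[ℝ] ℝ :=
  fderiv ℝ (fun z => S (z, y)) x

/-- `∂₂S`, the partial differential of `S` with respect to its second variable. -/
def D2 {d : ℕ} (S : Ed d × Ed d → ℝ) (x y : Ed d) : Ed d →L[ℝ] ℝ :=
  fderiv ℝ (fun z => S (x, z)) y

/-- A bi-infinite sequence `(x_n)_{n∈ℤ}` is extremal if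
`∂₂S(x_{n-1}, x_n) + ∂₁S(x_n, x_{n+1}) = 0` for every `n`. -/
def IsExtremal {d : ℕ} (S : Ed d × Ed d → ℝ) (u : ℤ → Ed d) : Prop :=
  ∀ n : ℤ, D2 S (u (n - 1)) (u n) + D1 S (u n) (u (n + 1)) = 0

/-- The action `S(x_0, …, x_n)` of a finite sequence. -/
def act {d : ℕ} (S : Ed d × Ed d → ℝ) (n : ℕ) (γ : ℕ → Ed d) : ℝ :=
  ∑ k ∈ Finset.range n, S (γ k, γ (k + 1))

/-- The sequence `(x, z_1, …, z_{N-1}, y)` built from interior points `z`. -/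
def path {d : ℕ} (x y : Ed d) (N : ℕ) (z : Fin (N - 1) → Ed d) : ℕ → Ed d :=
  fun k => if h0 : k = 0 then x else if h : k < N then z ⟨k - 1, by omega⟩ else y

/-- The fixed-endpoint action `S_{x,y,N} : (x_1, …, x_{N-1}) ↦ S(x, x_1, …, x_{N-1}, y)`. -/
def fixedAct {d : ℕ} (S : Ed d × Ed d → ℝ) (x y : Ed d) (N : ℕ) :
    (Fin (N - 1) → Ed d) → ℝ :=
  fun z => act S N (path x y N z)

/-- `S` has no conjugate points: for all `x, y` and `N ≥ 2`, the fixed-endpoint action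
`S_{x,y,N}` has exactly one critical point, and attains its global minimum there. -/
def NoConjPts {d : ℕ} (S : Ed d × Ed d → ℝ) : Prop :=
  ∀ (x y : Ed d) (N : ℕ), 2 ≤ N →
    ∃ z : Fin (N - 1) → Ed d,
      fderiv ℝ (fixedAct S x y N) z = 0 ∧
      (∀ w, fixedAct S x y N z ≤ fixedAct S x y N w) ∧
      (∀ z', fderiv ℝ (fixedAct S x y N) z' = 0 → z' = z)

/-- `A_N(x,y)`: the minimum of the fixed-endpoint action `S_{x,y,N}` for `N ≥ 2`,
and `S(x,y)` for `N = 1`. -/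
def AN {d : ℕ} (S : Ed d × Ed d → ℝ) (N : ℕ) (x y : Ed d) : ℝ :=
  if N ≤ 1 then S (x, y) else sInf (Set.range (fixedAct S x y N))

/-- The minimizing holonomic value `Σ̃(S)`. -/
def holVal {d : ℕ} (S : Ed d × Ed d → ℝ) : ℝ :=
  sInf { v : ℝ | ∃ n : ℕ, 1 ≤ n ∧ ∃ γ : ℕ → Ed d,
    (∃ r : Fin d → ℤ, γ n - γ 0 = intVec d r) ∧ v = act S n γ / n }

/-- The normalized action `S̃(x_0, …, x_n) = S(x_0, …, x_n) - n Σ̃(S)`. -/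
def actTilde {d : ℕ} (S : Ed d × Ed d → ℝ) (n : ℕ) (γ : ℕ → Ed d) : ℝ :=
  act S n γ - n * holVal S

/-- The Mañé potential `π(x,y)`. -/
def manePot {d : ℕ} (S : Ed d × Ed d → ℝ) (x y : Ed d) : ℝ :=
  sInf { v : ℝ | ∃ n : ℕ, 1 ≤ n ∧ ∃ γ : ℕ → Ed d,
    γ 0 = x ∧ (∃ r : Fin d → ℤ, γ n - y = intVec d r) ∧ v = actTilde S n γ }

/-- The Aubry set `Ā(S) ⊂ ℝ^d × ℝ^d`. -/
def aubry {d : ℕ} (S : Ed d × Ed d → ℝ) : Set (Ed d × Ed d) :=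
  { p | ∀ ε > 0, ∃ n : ℕ, 1 ≤ n ∧ ∃ γ : ℕ → Ed d,
      (∃ r : Fin d → ℤ, γ n - γ 0 = intVec d r) ∧
      ‖p.1 - γ 0‖ < ε ∧ ‖p.2 - γ 1‖ < ε ∧ actTilde S n γ < ε }

/-- The generating function `S_c(x,y) = S(x,y) + c(x - y)` associated to a cohomology
class `c ∈ (ℝ^d)*`. -/
def Sc {d : ℕ} (S : Ed d × Ed d → ℝ) (c : Ed d →L[ℝ] ℝ) : Ed d × Ed d → ℝ :=
  fun p => S p + c (p.1 - p.2)



/-! ### Auxiliary material for `stmt_10` -/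

section Stmt10Aux

variable {d : ℕ} {S : Ed d × Ed d → ℝ}

lemma stmt10_hasFDerivAt_slice1 (hdiff : Differentiable ℝ S) (a b : Ed d) :
    HasFDerivAt (fun z => S (z, b))
      ((fderiv ℝ S (a, b)).comp (ContinuousLinearMap.inl ℝ (Ed d) (Ed d))) a :=
  (hdiff (a, b)).hasFDerivAt.comp a ((hasFDerivAt_id a).prodMk (hasFDerivAt_const b a))

lemma stmt10_hasFDerivAt_slice2 (hdiff : Differentiable ℝ S) (a b : Ed d) :
    HasFDerivAt (fun z => S (a, z))
      ((fderiv ℝ S (a, b)).comp (ContinuousLinearMap.inr ℝ (Ed d) (Ed d))) b :=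
  (hdiff (a, b)).hasFDerivAt.comp b ((hasFDerivAt_const a b).prodMk (hasFDerivAt_id b))

lemma stmt10_D1_apply (hdiff : Differentiable ℝ S) (a b ξ : Ed d) :
    D1 S a b ξ = fderiv ℝ S (a, b) (ξ, 0) := by
  rw [D1, (stmt10_hasFDerivAt_slice1 hdiff a b).fderiv]; rfl

lemma stmt10_D2_apply (hdiff : Differentiable ℝ S) (a b ξ : Ed d) :
    D2 S a b ξ = fderiv ℝ S (a, b) (0, ξ) := by
  rw [D2, (stmt10_hasFDerivAt_slice2 hdiff a b).fderiv]; rfl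

lemma stmt10_fderiv_split (hdiff : Differentiable ℝ S) (a b ξ ζ : Ed d) :
    fderiv ℝ S (a, b) (ξ, ζ) = D1 S a b ξ + D2 S a b ζ := by
  rw [stmt10_D1_apply hdiff, stmt10_D2_apply hdiff, ← map_add]
  norm_num

lemma stmt10_twist_fderiv {A : ℝ}
    (htw : ∀ (x y ξ : Ed d), iteratedFDeriv ℝ 2 S (x, y) ![(ξ, 0), (0, ξ)] ≤ -A * ‖ξ‖ ^ 2)
    (p : Ed d × Ed d) (ξ : Ed d) :
    fderiv ℝ (fderiv ℝ S) p ((ξ, 0) : Ed d × Ed d) ((0, ξ) : Ed d × Ed d) ≤ -A * ‖ξ‖ ^ 2 := by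
  have := htw p.1 p.2 ξ
  rwa [iteratedFDeriv_two_apply] at this

lemma stmt10_eval_lt {g : ℝ → ℝ} {g' : ℝ → ℝ} {c : ℝ} (hc : c < 0)
    (hg : ∀ t, HasDerivAt g (g' t) t) (hle : ∀ t, g' t ≤ c) : g 1 < g 0 := by
  obtain ⟨t, _, ht⟩ := exists_hasDerivAt_eq_slope g g' one_pos
    (fun t _ => (hg t).continuousAt.continuousWithinAt) (fun t _ => hg t)
  have : g 1 - g 0 = g' t := by rw [ht]; ring
  nlinarith [hle t]

lemma stmt10_inj_D2 (hC : ContDiff ℝ 2 S) {A : ℝ} (hA : 0 < A)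
    (htw : ∀ (x y ξ : Ed d), iteratedFDeriv ℝ 2 S (x, y) ![(ξ, 0), (0, ξ)] ≤ -A * ‖ξ‖ ^ 2)
    (y : Ed d) : Function.Injective (fun x' => D2 S x' y) := by
  have hdiff : Differentiable ℝ S := hC.differentiable (by norm_num)
  have hF : Differentiable ℝ (fderiv ℝ S) :=
    (hC.fderiv_right (m := 1) (le_refl _)).differentiable (by norm_num)
  intro a b hab
  by_contra hne
  set u := a - b with hu
  have hu0 : u ≠ 0 := sub_ne_zero.mpr hne
  set c : ℝ → Ed d × Ed d := fun t => (b + t • u, y) with hcdef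
  have hc : ∀ t : ℝ, HasDerivAt c ((u, 0) : Ed d × Ed d) t := by
    intro t
    simpa using (((hasDerivAt_id t).smul_const u).const_add b).prodMk (hasDerivAt_const t y)
  set g : ℝ → ℝ := fun t => fderiv ℝ S (c t) ((0, u) : Ed d × Ed d) with hgdef
  have hg : ∀ t, HasDerivAt g (fderiv ℝ (fderiv ℝ S) (c t) ((u, 0) : Ed d × Ed d)
      ((0, u) : Ed d × Ed d)) t := by
    intro t
    have h1 : HasDerivAt (fun t => fderiv ℝ S (c t))
        (fderiv ℝ (fderiv ℝ S) (c t) ((u, 0) : Ed d × Ed d)) t :=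
      (hF (c t)).hasFDerivAt.comp_hasDerivAt t (hc t)
    simpa using h1.clm_apply (hasDerivAt_const t ((0, u) : Ed d × Ed d))
  have hlt : g 1 < g 0 := by
    refine stmt10_eval_lt (c := -A * ‖u‖ ^ 2) ?_ hg
      (fun t => stmt10_twist_fderiv htw (c t) u)
    have h1 : 0 < ‖u‖ := norm_pos_iff.mpr hu0
    have h2 : 0 < A * ‖u‖ ^ 2 := mul_pos hA (pow_pos h1 2)
    linarith
  have e1 : g 1 = D2 S a y u := by
    have hc1 : c 1 = (a, y) := by simp [hcdef, hu]
    show fderiv ℝ S (c 1) ((0, u) : Ed d × Ed d) = _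
    rw [hc1, stmt10_D2_apply hdiff]
  have e0 : g 0 = D2 S b y u := by
    have hc0 : c 0 = (b, y) := by simp [hcdef]
    show fderiv ℝ S (c 0) ((0, u) : Ed d × Ed d) = _
    rw [hc0, stmt10_D2_apply hdiff]
  have hab' : D2 S a y = D2 S b y := hab
  rw [e1, e0, hab'] at hlt
  exact lt_irrefl _ hlt

lemma stmt10_inj_D1 (hC : ContDiff ℝ 2 S) {A : ℝ} (hA : 0 < A)
    (htw : ∀ (x y ξ : Ed d), iteratedFDeriv ℝ 2 S (x, y) ![(ξ, 0), (0, ξ)] ≤ -A * ‖ξ‖ ^ 2)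
    (x : Ed d) : Function.Injective (fun y' => D1 S x y') := by
  have hdiff : Differentiable ℝ S := hC.differentiable (by norm_num)
  have hF : Differentiable ℝ (fderiv ℝ S) :=
    (hC.fderiv_right (m := 1) (le_refl _)).differentiable (by norm_num)
  have hsymm : ∀ (p : Ed d × Ed d) (v w : Ed d × Ed d),
      fderiv ℝ (fderiv ℝ S) p v w = fderiv ℝ (fderiv ℝ S) p w v := by
    intro p v w
    exact second_derivative_symmetric (fun q => (hdiff q).hasFDerivAt)
      (hF p).hasFDerivAt v w
  intro a b hab
  by_contra hne
  set u := a - b with hu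
  have hu0 : u ≠ 0 := sub_ne_zero.mpr hne
  set c : ℝ → Ed d × Ed d := fun t => (x, b + t • u) with hcdef
  have hc : ∀ t : ℝ, HasDerivAt c ((0, u) : Ed d × Ed d) t := by
    intro t
    simpa using (hasDerivAt_const t x).prodMk (((hasDerivAt_id t).smul_const u).const_add b)
  set g : ℝ → ℝ := fun t => fderiv ℝ S (c t) ((u, 0) : Ed d × Ed d) with hgdef
  have hg : ∀ t, HasDerivAt g (fderiv ℝ (fderiv ℝ S) (c t) ((0, u) : Ed d × Ed d)
      ((u, 0) : Ed d × Ed d)) t := by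
    intro t
    have h1 : HasDerivAt (fun t => fderiv ℝ S (c t))
        (fderiv ℝ (fderiv ℝ S) (c t) ((0, u) : Ed d × Ed d)) t :=
      (hF (c t)).hasFDerivAt.comp_hasDerivAt t (hc t)
    simpa using h1.clm_apply (hasDerivAt_const t ((u, 0) : Ed d × Ed d))
  have hlt : g 1 < g 0 := by
    refine stmt10_eval_lt (c := -A * ‖u‖ ^ 2) ?_ hg (fun t => ?_)
    · have h1 : 0 < ‖u‖ := norm_pos_iff.mpr hu0
      have h2 : 0 < A * ‖u‖ ^ 2 := mul_pos hA (pow_pos h1 2)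
      linarith
    · rw [hsymm]
      exact stmt10_twist_fderiv htw (c t) u
  have e1 : g 1 = D1 S x a u := by
    have hc1 : c 1 = (x, a) := by simp [hcdef, hu]
    show fderiv ℝ S (c 1) ((u, 0) : Ed d × Ed d) = _
    rw [hc1, stmt10_D1_apply hdiff]
  have e0 : g 0 = D1 S x b u := by
    have hc0 : c 0 = (x, b) := by simp [hcdef]
    show fderiv ℝ S (c 0) ((u, 0) : Ed d × Ed d) = _
    rw [hc0, stmt10_D1_apply hdiff]
  have hab' : D1 S x a = D1 S x b := hab
  rw [e1, e0, hab'] at hlt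
  exact lt_irrefl _ hlt

/-- The linear dependence of the `k`-th point of `path x y N z` on `z`. -/
def pathD (d N k : ℕ) : (Fin (N - 1) → Ed d) →L[ℝ] Ed d :=
  if h : 1 ≤ k ∧ k < N then ContinuousLinearMap.proj (⟨k - 1, by omega⟩ : Fin (N - 1)) else 0

lemma stmt10_hasFDerivAt_path (x y : Ed d) {N : ℕ} (z : Fin (N - 1) → Ed d) (k : ℕ) :
    HasFDerivAt (fun w : Fin (N - 1) → Ed d => path x y N w k) (pathD d N k) z := by
  by_cases hk0 : k = 0
  · have hfun : (fun w : Fin (N - 1) → Ed d => path x y N w k) = fun _ => x := by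
      funext w; simp [path, hk0]
    have hD : pathD d N k = 0 := by simp [pathD, hk0]
    rw [hfun, hD]; exact hasFDerivAt_const x z
  · by_cases hkN : k < N
    · have hfun : (fun w : Fin (N - 1) → Ed d => path x y N w k)
          = fun w => w ⟨k - 1, by omega⟩ := by
        funext w; simp [path, hk0, hkN]
      have hD : pathD d N k = ContinuousLinearMap.proj (⟨k - 1, by omega⟩ : Fin (N - 1)) := by
        simp [pathD, hk0, hkN, Nat.one_le_iff_ne_zero]
      rw [hfun, hD]
      exact (ContinuousLinearMap.proj (R := ℝ) (φ := fun _ : Fin (N - 1) => Ed d)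
        (⟨k - 1, by omega⟩ : Fin (N - 1))).hasFDerivAt
    · have hfun : (fun w : Fin (N - 1) → Ed d => path x y N w k) = fun _ => y := by
        funext w; simp [path, hk0, hkN]
      have hD : pathD d N k = 0 := by simp [pathD, hkN]
      rw [hfun, hD]; exact hasFDerivAt_const y z

lemma stmt10_hasFDerivAt_fixedAct (hdiff : Differentiable ℝ S) (x y : Ed d) {N : ℕ}
    (z : Fin (N - 1) → Ed d) :
    HasFDerivAt (fixedAct S x y N)
      (∑ k ∈ Finset.range N,
        (fderiv ℝ S (path x y N z k, path x y N z (k + 1))).comp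
          ((pathD d N k).prod (pathD d N (k + 1)))) z := by
  have hterm : ∀ k ∈ Finset.range N,
      HasFDerivAt (fun w : Fin (N - 1) → Ed d => S (path x y N w k, path x y N w (k + 1)))
        ((fderiv ℝ S (path x y N z k, path x y N z (k + 1))).comp
          ((pathD d N k).prod (pathD d N (k + 1)))) z :=
    fun k _ => (hdiff _).hasFDerivAt.comp z
      ((stmt10_hasFDerivAt_path x y z k).prodMk (stmt10_hasFDerivAt_path x y z (k + 1)))
  exact HasFDerivAt.fun_sum hterm

lemma stmt10_pathD_zero (N : ℕ) : pathD d N 0 = 0 := by simp [pathD]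

lemma stmt10_pathD_top (N : ℕ) : pathD d N N = 0 := by simp [pathD]

lemma stmt10_hasFDerivAt_fixedAct_zero (hdiff : Differentiable ℝ S) (x y : Ed d) (M : ℕ)
    (z : Fin (M + 2 - 1) → Ed d)
    (hbr : ∀ k : ℕ, k + 2 ≤ M + 2 →
      D2 S (path x y (M + 2) z k) (path x y (M + 2) z (k + 1))
        + D1 S (path x y (M + 2) z (k + 1)) (path x y (M + 2) z (k + 2)) = 0) :
    HasFDerivAt (fixedAct S x y (M + 2)) (0 : (Fin (M + 2 - 1) → Ed d) →L[ℝ] ℝ) z := by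
  have h := stmt10_hasFDerivAt_fixedAct hdiff x y (N := M + 2) z
  have hz : (∑ k ∈ Finset.range (M + 2),
      (fderiv ℝ S (path x y (M + 2) z k, path x y (M + 2) z (k + 1))).comp
        ((pathD d (M + 2) k).prod (pathD d (M + 2) (k + 1))))
      = (0 : (Fin (M + 2 - 1) → Ed d) →L[ℝ] ℝ) := by
    ext η
    rw [ContinuousLinearMap.sum_apply, ContinuousLinearMap.zero_apply]
    set P : ℕ → Ed d := fun k => path x y (M + 2) z k with hP
    set V : ℕ → (Fin (M + 2 - 1) → Ed d) →L[ℝ] Ed d := fun k => pathD d (M + 2) k with hV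
    have hterm : ∀ k, ((fderiv ℝ S (P k, P (k + 1))).comp ((V k).prod (V (k + 1)))) η
        = D1 S (P k) (P (k + 1)) (V k η) + D2 S (P k) (P (k + 1)) (V (k + 1) η) := by
      intro k
      rw [ContinuousLinearMap.comp_apply, ContinuousLinearMap.prod_apply,
        stmt10_fderiv_split hdiff]
    calc (∑ k ∈ Finset.range (M + 2),
            ((fderiv ℝ S (P k, P (k + 1))).comp ((V k).prod (V (k + 1)))) η)
        = ∑ k ∈ Finset.range (M + 2),
            (D1 S (P k) (P (k + 1)) (V k η) + D2 S (P k) (P (k + 1)) (V (k + 1) η)) :=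
          Finset.sum_congr rfl (fun k _ => hterm k)
      _ = (∑ k ∈ Finset.range (M + 2), D1 S (P k) (P (k + 1)) (V k η))
          + ∑ k ∈ Finset.range (M + 2), D2 S (P k) (P (k + 1)) (V (k + 1) η) :=
          Finset.sum_add_distrib
      _ = (∑ k ∈ Finset.range (M + 1), D1 S (P (k + 1)) (P (k + 2)) (V (k + 1) η))
          + ∑ k ∈ Finset.range (M + 1), D2 S (P k) (P (k + 1)) (V (k + 1) η) := by
          rw [Finset.sum_range_succ' (fun k => D1 S (P k) (P (k + 1)) (V k η)) (M + 1),
            Finset.sum_range_succ (fun k => D2 S (P k) (P (k + 1)) (V (k + 1) η)) (M + 1)]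
          have h1 : V 0 η = 0 := by rw [hV]; simp [stmt10_pathD_zero]
          have h2 : V (M + 2) η = 0 := by rw [hV]; simp [stmt10_pathD_top]
          rw [h1, h2, map_zero, map_zero, add_zero, add_zero]
      _ = ∑ k ∈ Finset.range (M + 1),
            ((D2 S (P k) (P (k + 1)) + D1 S (P (k + 1)) (P (k + 2))) (V (k + 1) η)) := by
          rw [← Finset.sum_add_distrib]
          refine Finset.sum_congr rfl (fun k _ => ?_)
          rw [ContinuousLinearMap.add_apply]
          ring
      _ = ∑ k ∈ Finset.range (M + 1), (0 : ℝ) := by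
          refine Finset.sum_congr rfl (fun k hk => ?_)
          have hkM := Finset.mem_range.mp hk
          rw [hbr k (by omega)]
          simp
      _ = 0 := Finset.sum_const_zero
  rw [← hz]
  exact h

lemma stmt10_path_const (x : Ed d) (N : ℕ) (k : ℕ) :
    path x x N (fun _ => x) k = x := by
  unfold path; split_ifs <;> rfl

lemma stmt10_fixedAct_const (x : Ed d) (N : ℕ) :
    fixedAct S x x N (fun _ => x) = N * S (x, x) := by
  unfold fixedAct act
  simp [stmt10_path_const]

lemma stmt10_fixedAct_detour (x q : Ed d) (M : ℕ) :
    fixedAct S x x (M + 2) (fun _ => q) = S (x, q) + M * S (q, q) + S (q, x) := by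
  have h0 : path x x (M + 2) (fun _ => q) 0 = x := by simp [path]
  have hlast : path x x (M + 2) (fun _ => q) (M + 2) = x := by
    unfold path
    rw [dif_neg (by omega), dif_neg (by omega)]
  have hmid : ∀ k : ℕ, 1 ≤ k → k ≤ M + 1 → path x x (M + 2) (fun _ => q) k = q := by
    intro k h1 h2
    unfold path
    rw [dif_neg (by omega), dif_pos (by omega)]
  show (∑ k ∈ Finset.range (M + 2),
      S (path x x (M + 2) (fun _ => q) k, path x x (M + 2) (fun _ => q) (k + 1))) = _
  rw [Finset.sum_range_succ'
    (fun k => S (path x x (M + 2) (fun _ => q) k, path x x (M + 2) (fun _ => q) (k + 1))) (M + 1),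
    Finset.sum_range_succ
    (fun k => S (path x x (M + 2) (fun _ => q) (k + 1), path x x (M + 2) (fun _ => q) (k + 2))) M]
  have hmidsum : (∑ k ∈ Finset.range M,
      S (path x x (M + 2) (fun _ => q) (k + 1), path x x (M + 2) (fun _ => q) (k + 2)))
      = M * S (q, q) := by
    have hcg : ∀ k ∈ Finset.range M,
        S (path x x (M + 2) (fun _ => q) (k + 1), path x x (M + 2) (fun _ => q) (k + 2))
          = S (q, q) := by
      intro k hk
      have hkM := Finset.mem_range.mp hk
      rw [hmid (k + 1) (by omega) (by omega), hmid (k + 2) (by omega) (by omega)]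
    rw [Finset.sum_congr rfl hcg, Finset.sum_const, Finset.card_range, nsmul_eq_mul]
  rw [hmidsum, hlast, h0, hmid (M + 1) (by omega) (by omega), hmid 1 (by omega) (by omega)]
  ring


lemma stmt10_bracket_of_fderiv (hdiff : Differentiable ℝ S) (x : Ed d)
    (hfd : fderiv ℝ (fun x : Ed d => S (x, x)) x = 0) : D2 S x x + D1 S x x = 0 := by
  have hphi : HasFDerivAt (fun x : Ed d => S (x, x))
      ((fderiv ℝ S (x, x)).comp
        ((ContinuousLinearMap.id ℝ (Ed d)).prod (ContinuousLinearMap.id ℝ (Ed d)))) x :=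
    (hdiff _).hasFDerivAt.comp x ((hasFDerivAt_id x).prodMk (hasFDerivAt_id x))
  rw [hphi.fderiv] at hfd
  ext ξ
  have h3 := ContinuousLinearMap.ext_iff.mp hfd ξ
  simp only [ContinuousLinearMap.comp_apply, ContinuousLinearMap.prod_apply,
    ContinuousLinearMap.coe_id', id_eq, ContinuousLinearMap.zero_apply] at h3
  rw [stmt10_fderiv_split hdiff] at h3
  simp only [ContinuousLinearMap.add_apply, ContinuousLinearMap.zero_apply]
  linarith

lemma stmt10_exists_max (hC : ContDiff ℝ 2 S)
    (hper : ∀ (r : Fin d → ℤ) (x y : Ed d), S (x + intVec d r, y + intVec d r) = S (x, y)) :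
    ∃ x₁ : Ed d, ∀ q : Ed d, S (q, q) ≤ S (x₁, x₁) := by
  have hcont : Continuous fun x : Ed d => S (x, x) :=
    hC.continuous.comp (continuous_id.prodMk continuous_id)
  obtain ⟨x₁, hmem, hmax⟩ := (isCompact_closedBall (0 : Ed d) (Real.sqrt d)).exists_isMaxOn
    ⟨0, Metric.mem_closedBall_self (Real.sqrt_nonneg _)⟩ hcont.continuousOn
  refine ⟨x₁, fun q => ?_⟩
  set r : Fin d → ℤ := fun i => ⌊q i⌋ with hr
  set v : Ed d := q - intVec d r with hvdef
  have hvq : v + intVec d r = q := by rw [hvdef]; abel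
  have hphi : S (q, q) = S (v, v) := by
    conv_lhs => rw [← hvq]
    exact hper r v v
  have hnorm : ‖v‖ ≤ Real.sqrt d := by
    rw [EuclideanSpace.norm_eq]
    apply Real.sqrt_le_sqrt
    have hb : ∀ i : Fin d, ‖v i‖ ^ 2 ≤ 1 := by
      intro i
      have hvi : v i = Int.fract (q i) := by
        rw [hvdef]
        rw [PiLp.sub_apply]
        rw [show (intVec d r) i = (r i : ℝ) from rfl]
        rw [hr, Int.self_sub_floor]
      rw [hvi]
      have h0 := Int.fract_nonneg (q i)
      have h1 := (Int.fract_lt_one (q i)).le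
      rw [Real.norm_eq_abs, abs_of_nonneg h0]
      nlinarith
    calc (∑ i : Fin d, ‖v i‖ ^ 2) ≤ ∑ _i : Fin d, (1 : ℝ) :=
          Finset.sum_le_sum (fun i _ => hb i)
      _ = d := by simp
  rw [hphi]
  exact hmax (mem_closedBall_zero_iff.mpr hnorm)

end Stmt10Aux


/-- If `S` has no conjugate points, then (i) every constant sequence is extremal, i.e.
`∂₂S(x,x) + ∂₁S(x,x) = 0` for all `x`, and (ii) every extremal sequence is either
injective or constant. -/
theorem stmt_10 (d : ℕ) (hd : 1 ≤ d) (S : Ed d × Ed d → ℝ) (hS : IsGenFn S)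
    (h : NoConjPts S) :
    ((∀ x : Ed d, IsExtremal S (fun _ => x)) ∧ ∀ x : Ed d, D2 S x x + D1 S x x = 0) ∧
    (∀ u : ℤ → Ed d, IsExtremal S u →
      Function.Injective u ∨ ∃ x : Ed d, ∀ n : ℤ, u n = x) := by
  obtain ⟨hC, hper, A, hA, htw⟩ := hS
  have hdiff : Differentiable ℝ S := hC.differentiable (by norm_num)
  obtain ⟨x₁, hmax⟩ := stmt10_exists_max hC hper
  have hbr1 : D2 S x₁ x₁ + D1 S x₁ x₁ = 0 := by
    apply stmt10_bracket_of_fderiv hdiff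
    have hloc : IsLocalMax (fun x : Ed d => S (x, x)) x₁ := Filter.Eventually.of_forall hmax
    exact hloc.fderiv_eq_zero
  have hconst : ∀ q, S (x₁, x₁) ≤ S (q, q) := by
    intro q
    by_contra hlt
    push_neg at hlt
    have key : ∀ M : ℕ, ((M : ℝ) + 2) * S (x₁, x₁) ≤ S (x₁, q) + M * S (q, q) + S (q, x₁) := by
      intro M
      obtain ⟨z, hzc, hzmin, hzuniq⟩ := h x₁ x₁ (M + 2) (by omega)
      have hcc : HasFDerivAt (fixedAct S x₁ x₁ (M + 2))
          (0 : (Fin (M + 2 - 1) → Ed d) →L[ℝ] ℝ) (fun _ : Fin (M + 2 - 1) => x₁) := by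
        apply stmt10_hasFDerivAt_fixedAct_zero hdiff x₁ x₁ M _ ?_
        intro k hk
        rw [stmt10_path_const, stmt10_path_const, stmt10_path_const]
        exact hbr1
      have he : (fun _ : Fin (M + 2 - 1) => x₁) = z := hzuniq _ hcc.fderiv
      have hmin := hzmin (fun _ => q)
      rw [← he, stmt10_fixedAct_const, stmt10_fixedAct_detour] at hmin
      push_cast at hmin ⊢
      linarith
    obtain ⟨M, hM⟩ := exists_nat_gt
      ((S (x₁, q) + S (q, x₁) - 2 * S (x₁, x₁)) / (S (x₁, x₁) - S (q, q)))
    have hδ : 0 < S (x₁, x₁) - S (q, q) := by linarith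
    have hkey := key M
    rw [div_lt_iff₀ hδ] at hM
    nlinarith
  have hphiconst : (fun x : Ed d => S (x, x)) = fun _ => S (x₁, x₁) :=
    funext (fun q => le_antisymm (hmax q) (hconst q))
  have hbrall : ∀ x : Ed d, D2 S x x + D1 S x x = 0 := by
    intro x
    apply stmt10_bracket_of_fderiv hdiff
    rw [hphiconst]
    exact fderiv_const_apply _
  refine ⟨⟨fun x _ => hbrall x, hbrall⟩, ?_⟩
  intro u hu
  by_cases hinj : Function.Injective u
  · exact Or.inl hinj
  right
  have hcons : ∃ m : ℤ, u (m + 1) = u m := by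
    rw [Function.not_injective_iff] at hinj
    obtain ⟨a, b, hab, hne⟩ := hinj
    obtain ⟨m, n, hmn, hum⟩ : ∃ m n : ℤ, m < n ∧ u m = u n := by
      rcases hne.lt_or_gt with hlt | hlt
      · exact ⟨a, b, hlt, hab⟩
      · exact ⟨b, a, hlt, hab.symm⟩
    by_cases h2 : n = m + 1
    · refine ⟨m, ?_⟩
      rw [← h2]
      exact hum.symm
    · obtain ⟨M, hM⟩ : ∃ M : ℕ, (n - m).toNat = M + 2 := ⟨(n - m).toNat - 2, by omega⟩
      have hn : n = m + M + 2 := by omega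
      set zu : Fin (M + 2 - 1) → Ed d := fun j => u (m + (j : ℕ) + 1) with hzu
      have hpath : ∀ k : ℕ, k ≤ M + 2 → path (u m) (u m) (M + 2) zu k = u (m + k) := by
        intro k hk
        unfold path
        split_ifs with hc0 hcN
        · subst hc0; norm_num
        · show u (m + ((k - 1 : ℕ) : ℤ) + 1) = u (m + (k : ℤ))
          have hidx : m + ((k - 1 : ℕ) : ℤ) + 1 = m + (k : ℤ) := by omega
          rw [hidx]
        · have hkeq : k = M + 2 := by omega
          subst hkeq
          rw [hum]
          have hidx : m + ((M + 2 : ℕ) : ℤ) = n := by push_cast; omega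
          rw [hidx]
      obtain ⟨z, hzc, hzmin, hzuniq⟩ := h (u m) (u m) (M + 2) (by omega)
      have hcrit : HasFDerivAt (fixedAct S (u m) (u m) (M + 2))
          (0 : (Fin (M + 2 - 1) → Ed d) →L[ℝ] ℝ) zu := by
        apply stmt10_hasFDerivAt_fixedAct_zero hdiff _ _ M zu ?_
        intro k hk
        rw [hpath k (by omega), hpath (k + 1) (by omega), hpath (k + 2) (by omega)]
        have he := hu (m + k + 1)
        have e1 : m + (k : ℤ) + 1 - 1 = m + k := by ring
        have e2 : (m + ((k + 1 : ℕ) : ℤ)) = m + k + 1 := by push_cast; ring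
        have e3 : (m + ((k + 2 : ℕ) : ℤ)) = m + k + 1 + 1 := by push_cast; ring
        rw [e2, e3]
        rw [e1] at he
        exact he
      have hconstcrit : HasFDerivAt (fixedAct S (u m) (u m) (M + 2))
          (0 : (Fin (M + 2 - 1) → Ed d) →L[ℝ] ℝ) (fun _ : Fin (M + 2 - 1) => u m) := by
        apply stmt10_hasFDerivAt_fixedAct_zero hdiff _ _ M _ ?_
        intro k hk
        rw [stmt10_path_const, stmt10_path_const, stmt10_path_const]
        exact hbrall (u m)
      have e1 : zu = z := hzuniq _ hcrit.fderiv
      have e2 : (fun _ : Fin (M + 2 - 1) => u m) = z := hzuniq _ hconstcrit.fderiv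
      have e3 : zu = fun _ : Fin (M + 2 - 1) => u m := by rw [e1, ← e2]
      have e4 := congrFun e3 ⟨0, by omega⟩
      rw [hzu] at e4
      refine ⟨m, ?_⟩
      simpa using e4
  obtain ⟨m, hm⟩ := hcons
  have fwd : ∀ j : ℕ, u (m + j) = u m ∧ u (m + j + 1) = u m := by
    intro j
    induction j with
    | zero => exact ⟨by norm_num, by simpa using hm⟩
    | succ j ih =>
      obtain ⟨h1, h2⟩ := ih
      have h3 : u (m + j + 2) = u m := by
        have he := hu (m + j + 1)
        rw [show m + (j : ℤ) + 1 - 1 = m + j by ring] at he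
        rw [h1, h2] at he
        have hb := hbrall (u m)
        have hD : D1 S (u m) (u (m + j + 1 + 1)) = D1 S (u m) (u m) :=
          add_left_cancel (he.trans hb.symm)
        have hres := stmt10_inj_D1 hC hA htw (u m) hD
        rw [show m + (j : ℤ) + 1 + 1 = m + j + 2 by ring] at hres
        exact hres
      constructor
      · rw [show m + ((j + 1 : ℕ) : ℤ) = m + j + 1 by push_cast; ring]; exact h2
      · rw [show m + ((j + 1 : ℕ) : ℤ) + 1 = m + j + 2 by push_cast; ring]; exact h3
  have bwd : ∀ j : ℕ, u (m - j) = u m ∧ u (m - j + 1) = u m := by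
    intro j
    induction j with
    | zero => exact ⟨by norm_num, by simpa using hm⟩
    | succ j ih =>
      obtain ⟨h1, h2⟩ := ih
      have h3 : u (m - j - 1) = u m := by
        have he := hu (m - j)
        rw [h1, h2] at he
        have hb := hbrall (u m)
        have hD : D2 S (u (m - j - 1)) (u m) = D2 S (u m) (u m) :=
          add_right_cancel (he.trans hb.symm)
        exact stmt10_inj_D2 hC hA htw (u m) hD
      constructor
      · rw [show m - ((j + 1 : ℕ) : ℤ) = m - j - 1 by push_cast; ring]; exact h3
      · rw [show m - ((j + 1 : ℕ) : ℤ) + 1 = m - j by push_cast; ring]; exact h1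
  refine ⟨u m, fun k => ?_⟩
  rcases le_or_gt m k with hk | hk
  · have hres := (fwd (k - m).toNat).1
    rw [show m + (((k - m).toNat : ℕ) : ℤ) = k by omega] at hres
    exact hres
  · have hres := (bwd (m - k).toNat).1
    rw [show m - (((m - k).toNat : ℕ) : ℤ) = k by omega] at hres
    exact hres


end
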